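/- Let E, F be finite-dimensional complex vector spaces, let γ : E → F be a linear map, and let α : E → E and β : F → F be linear maps whose spectra are contained in Σ₁. Then γ ∘ exp(2πi·α) = exp(2πi·β) ∘ γ if and only if γ ∘ α = β ∘ γ. -/

import Mathlib

open Complex NormedSpace
set_option maxHeartbeats 1000000
set_option synthInstance.maxHeartbeats 400000

noncomputable section

/-- The set Σ: complex numbers `α` with `-1 ≤ Re α ≤ 0`, `Im α ≥ 0` if `Re α = -1`,
and `Im α < 0` if `Re α = 0`. -/
def SigmaSet : Set ℂ :=
  {α : ℂ | -1 ≤ α.re ∧ α.re ≤ 0 ∧ (α.re = -1 → 0 ≤ α.im) ∧ (α.re = 0 → α.im < 0)}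

/-- The set Σ₁ := Σ + 1. -/
def Sigma1 : Set ℂ := {α : ℂ | α - 1 ∈ SigmaSet}

/-- The constant `2πi`. -/
def twoPiI : ℂ := 2 * Real.pi * Complex.I

/-- The exponential `exp(2πi·f)` of an endomorphism `f`. -/
def expEnd {E : Type*} [NormedAddCommGroup E] [NormedSpace ℂ E] (f : E →L[ℂ] E) :
    E →L[ℂ] E :=
  NormedSpace.exp (twoPiI • f)

/-- The power series `ψ(A) := ∑_{k=1}^∞ ((2πi)^k / k!) A^(k-1)`. It satisfies
`A·ψ(A) = ψ(A)·A = exp(2πi·A) − Id`. -/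
def psiEnd {E : Type*} [NormedAddCommGroup E] [NormedSpace ℂ E] (A : E →L[ℂ] E) :
    E →L[ℂ] E :=
  ∑' k : ℕ, ((twoPiI ^ (k + 1) / (Nat.factorial (k + 1) : ℂ)) • A ^ k)

instance (priority := 100) instTopRingCLM {E F : Type*} [NormedAddCommGroup E]
    [NormedSpace ℂ E] [NormedAddCommGroup F] [NormedSpace ℂ F] :
    IsTopologicalRing ((E →L[ℂ] F) →L[ℂ] (E →L[ℂ] F)) :=
  @NonUnitalSeminormedRing.toIsTopologicalRing _
    ContinuousLinearMap.toSeminormedRing.toNonUnitalSeminormedRing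

lemma twoPiI_ne_zero : twoPiI ≠ 0 := by
  simp [twoPiI, Real.pi_ne_zero, Complex.I_ne_zero, Complex.ofReal_ne_zero]

lemma sigma1_sub {a b : ℂ} (ha : a ∈ Sigma1) (hb : b ∈ Sigma1) {n : ℤ}
    (h : a - b = (n : ℂ)) : n = 0 := by
  simp only [Sigma1, SigmaSet, Set.mem_setOf_eq, Complex.sub_re, Complex.sub_im,
    Complex.one_re, Complex.one_im, sub_zero] at ha hb
  obtain ⟨ha1, ha2, ha3, ha4⟩ := ha
  obtain ⟨hb1, hb2, hb3, hb4⟩ := hb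
  have hre : a.re - b.re = (n : ℝ) := by
    have := congrArg Complex.re h; simpa using this
  have him : a.im - b.im = 0 := by
    have := congrArg Complex.im h; simpa using this
  have h1 : (-1 : ℝ) ≤ (n : ℝ) := by linarith
  have h2 : (n : ℝ) ≤ 1 := by linarith
  have h1' : (-1 : ℤ) ≤ n := by exact_mod_cast h1
  have h2' : n ≤ 1 := by exact_mod_cast h2
  by_contra hn
  have : n = -1 ∨ n = 1 := by omega
  rcases this with rfl | rfl
  · push_cast at hre
    have := hb4 (by linarith)
    have := ha3 (by linarith)
    linarith
  · push_cast at hre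
    have := ha4 (by linarith)
    have := hb3 (by linarith)
    linarith

lemma psi_summable {𝔸 : Type*} [NormedRing 𝔸] [NormedAlgebra ℂ 𝔸] [CompleteSpace 𝔸] (A : 𝔸)
    (hA : ∀ k : ℕ, ‖A ^ k‖ ≤ ‖A‖ ^ k) :
    Summable (fun k : ℕ => (twoPiI ^ (k + 1) / (Nat.factorial (k + 1) : ℂ)) • A ^ k) := by
  apply Summable.of_norm_bounded
    (g := fun k => ‖twoPiI‖ * ((‖twoPiI‖ * ‖A‖) ^ k / (Nat.factorial k : ℝ)))
  · exact (Real.summable_pow_div_factorial (‖twoPiI‖ * ‖A‖)).mul_left _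
  · intro k
    rw [norm_smul]
    have h1 : ‖twoPiI ^ (k + 1) / (Nat.factorial (k + 1) : ℂ)‖
        = ‖twoPiI‖ ^ (k + 1) / (Nat.factorial (k + 1) : ℝ) := by
      rw [norm_div, norm_pow]
      norm_num
    rw [h1]
    have hfac : (Nat.factorial k : ℝ) ≤ (Nat.factorial (k + 1) : ℝ) := by
      exact_mod_cast Nat.factorial_le (Nat.le_succ k)
    have hfk : (0:ℝ) < (Nat.factorial k : ℝ) := by positivity
    calc ‖twoPiI‖ ^ (k + 1) / (Nat.factorial (k + 1) : ℝ) * ‖A ^ k‖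
        ≤ ‖twoPiI‖ ^ (k + 1) / (Nat.factorial k : ℝ) * ‖A‖ ^ k := by
          gcongr
          exact hA k
      _ = ‖twoPiI‖ * ((‖twoPiI‖ * ‖A‖) ^ k / (Nat.factorial k : ℝ)) := by
          rw [mul_pow, pow_succ]
          ring

lemma clm_norm_pow_le {G : Type*} [NormedAddCommGroup G] [NormedSpace ℂ G] (A : G →L[ℂ] G)
    (k : ℕ) : ‖A ^ k‖ ≤ ‖A‖ ^ k := by
  induction k with
  | zero => simp only [pow_zero]; exact ContinuousLinearMap.norm_id_le
  | succ n ih =>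
    rw [pow_succ, pow_succ]
    calc ‖A ^ n * A‖ ≤ ‖A ^ n‖ * ‖A‖ := norm_mul_le _ _
      _ ≤ ‖A‖ ^ n * ‖A‖ := by gcongr


section ops
variable {E F : Type*} [NormedAddCommGroup E] [NormedSpace ℂ E]
  [NormedAddCommGroup F] [NormedSpace ℂ F]

/-- right-composition operator `g ↦ g ∘ α`. -/
def rOp (α : E →L[ℂ] E) : (E →L[ℂ] F) →L[ℂ] (E →L[ℂ] F) :=
  (ContinuousLinearMap.compL ℂ E E F).flip α

/-- left-composition operator `g ↦ β ∘ g`. -/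
def lOp (β : F →L[ℂ] F) : (E →L[ℂ] F) →L[ℂ] (E →L[ℂ] F) :=
  ContinuousLinearMap.compL ℂ E F F β

@[simp] lemma rOp_apply (α : E →L[ℂ] E) (g : E →L[ℂ] F) : rOp α g = g.comp α := rfl
@[simp] lemma lOp_apply (β : F →L[ℂ] F) (g : E →L[ℂ] F) : lOp β g = β.comp g := rfl

lemma rOp_smul (c : ℂ) (α : E →L[ℂ] E) : rOp (F := F) (c • α) = c • rOp α :=
  map_smul ((ContinuousLinearMap.compL ℂ E E F).flip) c α

lemma lOp_smul (c : ℂ) (β : F →L[ℂ] F) : lOp (E := E) (c • β) = c • lOp β :=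
  map_smul (ContinuousLinearMap.compL ℂ E F F) c β

lemma rOp_pow (α : E →L[ℂ] E) (n : ℕ) (g : E →L[ℂ] F) :
    ((rOp α) ^ n) g = g.comp (α ^ n) := by
  induction n with
  | zero => simp [ContinuousLinearMap.one_def]
  | succ n ih =>
    rw [pow_succ', ContinuousLinearMap.mul_apply, ih, rOp_apply, pow_succ]
    rfl

lemma lOp_pow (β : F →L[ℂ] F) (n : ℕ) (g : E →L[ℂ] F) :
    ((lOp β) ^ n) g = (β ^ n).comp g := by
  induction n with
  | zero => simp [ContinuousLinearMap.one_def]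
  | succ n ih =>
    rw [pow_succ', ContinuousLinearMap.mul_apply, ih, lOp_apply, pow_succ']
    rfl

lemma commute_lOp_rOp (α : E →L[ℂ] E) (β : F →L[ℂ] F) :
    Commute (lOp (E := E) β) (rOp (F := F) α) := by
  refine ContinuousLinearMap.ext fun g => ?_
  rfl

variable [CompleteSpace E] [CompleteSpace F]

lemma hasSum_exp_apply (T : (E →L[ℂ] F) →L[ℂ] (E →L[ℂ] F)) (γ : E →L[ℂ] F) :
    HasSum (fun n : ℕ => ((n.factorial : ℂ)⁻¹ • T ^ n) γ) (NormedSpace.exp T γ) := by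
  have e0 : NormedSpace.exp T = ∑' n : ℕ, (n.factorial : ℂ)⁻¹ • T ^ n :=
    congrFun (exp_eq_tsum ℂ) T
  have h1 := (expSeries_summable' (𝕂 := ℂ) T).hasSum.mapL
    (ContinuousLinearMap.apply ℂ (E →L[ℂ] F) γ)
  rw [← e0] at h1
  simpa only [ContinuousLinearMap.apply_apply] using h1

lemma exp_rOp_apply (α : E →L[ℂ] E) (γ : E →L[ℂ] F) :
    NormedSpace.exp (rOp (F := F) α) γ = γ.comp (NormedSpace.exp α) := by
  have h1 := hasSum_exp_apply (rOp (F := F) α) γ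
  have e0 : NormedSpace.exp α = ∑' n : ℕ, (n.factorial : ℂ)⁻¹ • α ^ n :=
    congrFun (exp_eq_tsum ℂ) α
  have h2 := (expSeries_summable' (𝕂 := ℂ) α).hasSum.mapL (ContinuousLinearMap.compL ℂ E E F γ)
  rw [← e0] at h2
  simp only [ContinuousLinearMap.compL_apply, ContinuousLinearMap.comp_smul] at h2
  simp only [ContinuousLinearMap.smul_apply, rOp_pow] at h1
  exact h1.unique h2

lemma exp_lOp_apply (β : F →L[ℂ] F) (γ : E →L[ℂ] F) :
    NormedSpace.exp (lOp (E := E) β) γ = (NormedSpace.exp β).comp γ := by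
  have h1 := hasSum_exp_apply (lOp (E := E) β) γ
  have e0 : NormedSpace.exp β = ∑' n : ℕ, (n.factorial : ℂ)⁻¹ • β ^ n :=
    congrFun (exp_eq_tsum ℂ) β
  have h2 := (expSeries_summable' (𝕂 := ℂ) β).hasSum.mapL
    ((ContinuousLinearMap.compL ℂ E F F).flip γ)
  rw [← e0] at h2
  simp only [ContinuousLinearMap.flip_apply, ContinuousLinearMap.compL_apply,
    ContinuousLinearMap.smul_comp] at h2
  simp only [ContinuousLinearMap.smul_apply, lOp_pow] at h1
  exact h1.unique h2

lemma expEnd_rOp_apply (α : E →L[ℂ] E) (γ : E →L[ℂ] F) :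
    expEnd (rOp (F := F) α) γ = γ.comp (expEnd α) := by
  unfold expEnd
  rw [← rOp_smul]
  exact exp_rOp_apply (twoPiI • α) γ

lemma expEnd_lOp_apply (β : F →L[ℂ] F) (γ : E →L[ℂ] F) :
    expEnd (lOp (E := E) β) γ = (expEnd β).comp γ := by
  unfold expEnd
  rw [← lOp_smul]
  exact exp_lOp_apply (twoPiI • β) γ

end ops

section psi
variable {G : Type*} [NormedAddCommGroup G] [NormedSpace ℂ G] [CompleteSpace G]

lemma exp_clm_eq_tsum (T : G →L[ℂ] G) :
    NormedSpace.exp T = ∑' n : ℕ, (n.factorial : ℂ)⁻¹ • T ^ n :=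
  congrFun (exp_eq_tsum ℂ) T

lemma psi_hasSum (A : G →L[ℂ] G) :
    HasSum (fun k : ℕ => (twoPiI ^ (k + 1) / (Nat.factorial (k + 1) : ℂ)) • A ^ k)
      (psiEnd A) :=
  (psi_summable A (clm_norm_pow_le A)).hasSum

lemma commute_psiEnd (A : G →L[ℂ] G) : A * psiEnd A = psiEnd A * A := by
  have h1 := (psi_hasSum A).mapL (ContinuousLinearMap.mul ℂ (G →L[ℂ] G) A)
  have h2 := (psi_hasSum A).mapL ((ContinuousLinearMap.mul ℂ (G →L[ℂ] G)).flip A)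
  simp only [ContinuousLinearMap.mul_apply', ContinuousLinearMap.flip_apply,
    mul_smul_comm, smul_mul_assoc, ← pow_succ, ← pow_succ'] at h1 h2
  exact h1.unique h2

lemma hasSum_exp (T : G →L[ℂ] G) :
    HasSum (fun n : ℕ => (Nat.factorial n : ℂ)⁻¹ • T ^ n) (NormedSpace.exp T) := by
  have h := (expSeries_summable' (𝕂 := ℂ) T).hasSum
  rwa [← exp_clm_eq_tsum] at h

lemma expEnd_eq (A : G →L[ℂ] G) : expEnd A = 1 + A * psiEnd A := by
  have h0 := hasSum_exp (twoPiI • A)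
  have hfg : (fun n : ℕ => ((Nat.factorial n : ℂ))⁻¹ • (twoPiI • A) ^ n)
      = fun n : ℕ => (twoPiI ^ n / (Nat.factorial n : ℂ)) • A ^ n := by
    funext n
    rw [smul_pow, smul_smul, div_eq_mul_inv, mul_comm]
  rw [hfg] at h0
  have h1 := (hasSum_nat_add_iff' (f := fun n : ℕ => (twoPiI ^ n / (Nat.factorial n : ℂ)) • A ^ n)
    1).mpr h0
  simp only [Finset.sum_range_one, pow_zero, Nat.factorial_zero, Nat.cast_one, div_one,
    one_smul] at h1
  have h2 := (psi_hasSum A).mapL (ContinuousLinearMap.mul ℂ (G →L[ℂ] G) A)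
  simp only [ContinuousLinearMap.mul_apply', mul_smul_comm, ← pow_succ'] at h2
  have := h1.unique h2
  rw [sub_eq_iff_eq_add'] at this
  exact this

lemma expEnd_add_of_commute (x y : G →L[ℂ] G) (h : Commute x y) :
    expEnd (x + y) = expEnd x * expEnd y := by
  have h' : Commute (twoPiI • x) (twoPiI • y) := by
    show _ * _ = _ * _
    rw [smul_mul_assoc, smul_mul_assoc, mul_smul_comm, mul_smul_comm, h.eq]
  unfold expEnd
  rw [smul_add]
  let +nondep : NormedAlgebra ℚ (G →L[ℂ] G) := .restrictScalars ℚ ℂ (G →L[ℂ] G)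
  exact exp_add_of_commute h'

lemma expEnd_neg_mul (x : G →L[ℂ] G) : expEnd (-x) * expEnd x = 1 := by
  rw [← expEnd_add_of_commute (-x) x (Commute.refl x).neg_left, neg_add_cancel]
  unfold expEnd
  rw [smul_zero, NormedSpace.exp_zero]

end psi

section eigen
variable {G : Type*} [NormedAddCommGroup G] [NormedSpace ℂ G] [CompleteSpace G]

lemma pow_apply_eigen {A : G →L[ℂ] G} {μ : ℂ} {g : G} (h : A g = μ • g) (k : ℕ) :
    (A ^ k) g = μ ^ k • g := by
  induction k with
  | zero => simp
  | succ n ih =>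
    rw [pow_succ', ContinuousLinearMap.mul_apply, ih, map_smul, h, smul_smul, ← pow_succ]

/-- The scalar sum `ψ(μ) = ∑ (2πi)^{k+1}/(k+1)! μ^k`. -/
def sPsi (μ : ℂ) : ℂ := ∑' k : ℕ, twoPiI ^ (k + 1) / (Nat.factorial (k + 1) : ℂ) * μ ^ k

lemma sPsi_hasSum (μ : ℂ) :
    HasSum (fun k : ℕ => twoPiI ^ (k + 1) / (Nat.factorial (k + 1) : ℂ) * μ ^ k) (sPsi μ) := by
  have h := (psi_summable (𝔸 := ℂ) μ (fun k => by rw [norm_pow])).hasSum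
  simp only [smul_eq_mul] at h
  exact h

lemma psiEnd_apply_eigen {A : G →L[ℂ] G} {μ : ℂ} {g : G} (h : A g = μ • g) :
    psiEnd A g = sPsi μ • g := by
  have h1 := (psi_hasSum A).mapL (ContinuousLinearMap.apply ℂ G g)
  simp only [ContinuousLinearMap.apply_apply, ContinuousLinearMap.smul_apply] at h1
  have h1' : HasSum (fun k : ℕ => (twoPiI ^ (k + 1) / (Nat.factorial (k + 1) : ℂ) * μ ^ k) • g)
      (psiEnd A g) := by
    have e : (fun k : ℕ => (twoPiI ^ (k + 1) / (Nat.factorial (k + 1) : ℂ)) • (A ^ k) g)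
        = fun k : ℕ => (twoPiI ^ (k + 1) / (Nat.factorial (k + 1) : ℂ) * μ ^ k) • g := by
      funext k
      rw [pow_apply_eigen h, smul_smul]
    rwa [e] at h1
  exact h1'.unique ((sPsi_hasSum μ).smul_const g)

lemma sPsi_zero : sPsi 0 = twoPiI := by
  have h : ∀ k : ℕ, k ≠ 0 → twoPiI ^ (k + 1) / (Nat.factorial (k + 1) : ℂ) * (0 : ℂ) ^ k = 0 := by
    intro k hk
    rw [zero_pow hk, mul_zero]
  rw [sPsi, tsum_eq_single 0 h]
  simp

lemma hasSum_exp_ℂ (z : ℂ) :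
    HasSum (fun n : ℕ => z ^ n / (Nat.factorial n : ℂ)) (Complex.exp z) := by
  have h := (NormedSpace.expSeries_div_summable z).hasSum
  have e : NormedSpace.exp z = ∑' n : ℕ, z ^ n / (Nat.factorial n : ℂ) :=
    congrFun NormedSpace.exp_eq_tsum_div z
  rw [Complex.exp_eq_exp_ℂ, e]
  exact h

lemma sPsi_eq_zero {μ : ℂ} (h : sPsi μ = 0) : ∃ n : ℤ, n ≠ 0 ∧ μ = (n : ℂ) := by
  have hμ0 : μ ≠ 0 := by
    rintro rfl
    rw [sPsi_zero] at h
    exact twoPiI_ne_zero h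
  -- identity exp(2πi μ) = 1 + μ * sPsi μ
  have h0 := hasSum_exp_ℂ (twoPiI * μ)
  have hid : Complex.exp (twoPiI * μ) = 1 + μ * sPsi μ := by
    have h1 := (hasSum_nat_add_iff'
      (f := fun n : ℕ => (twoPiI * μ) ^ n / (Nat.factorial n : ℂ)) 1).mpr h0
    simp only [Finset.sum_range_one, pow_zero, Nat.factorial_zero, Nat.cast_one, div_one] at h1
    have h2 := (sPsi_hasSum μ).mul_left μ
    have e : (fun k : ℕ => μ * (twoPiI ^ (k + 1) / (Nat.factorial (k + 1) : ℂ) * μ ^ k))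
        = fun k : ℕ => (twoPiI * μ) ^ (k + 1) / (Nat.factorial (k + 1) : ℂ) := by
      funext k
      rw [mul_pow]
      ring
    rw [e] at h2
    have := h1.unique h2
    rw [sub_eq_iff_eq_add'] at this
    exact this
  rw [h, mul_zero, add_zero] at hid
  obtain ⟨n, hn⟩ := Complex.exp_eq_one_iff.mp hid
  refine ⟨n, ?_, ?_⟩
  · rintro rfl
    simp only [Int.cast_zero, zero_mul] at hn
    have : μ = 0 := by
      have h2 : twoPiI * μ = twoPiI * 0 := by rw [hn, mul_zero]
      exact mul_left_cancel₀ twoPiI_ne_zero h2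
    exact hμ0 this
  · have h2 : twoPiI * μ = twoPiI * (n : ℂ) := by
      rw [hn, twoPiI]
      ring
    exact mul_left_cancel₀ twoPiI_ne_zero h2

end eigen

section linalg
open Polynomial
variable {E F : Type*} [NormedAddCommGroup E] [NormedSpace ℂ E] [FiniteDimensional ℂ E]
  [NormedAddCommGroup F] [NormedSpace ℂ F] [FiniteDimensional ℂ F]

lemma mem_spectrum_of_hasEigenvalue {f : E →L[ℂ] E} {r : ℂ}
    (h : Module.End.HasEigenvalue (f : E →ₗ[ℂ] E) r) : r ∈ spectrum ℂ f := by
  rw [spectrum.mem_iff]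
  intro hu
  obtain ⟨v, hv⟩ := h.exists_hasEigenvector
  obtain ⟨u, hu'⟩ := hu
  have hv0 : (algebraMap ℂ (E →L[ℂ] E) r - f) v = 0 := by
    have happ : (f : E →ₗ[ℂ] E) v = r • v := hv.apply_eq_smul
    have : f v = r • v := happ
    rw [ContinuousLinearMap.sub_apply, Algebra.algebraMap_eq_smul_one,
      ContinuousLinearMap.smul_apply, ContinuousLinearMap.one_apply, this, sub_self]
  have : v = 0 := by
    have h1 : (↑u⁻¹ * ↑u : E →L[ℂ] E) v = v := by rw [u.inv_mul]; rfl
    rw [ContinuousLinearMap.mul_apply, hu', hv0, map_zero] at h1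
    exact h1.symm
  exact hv.2 this

lemma list_prod_injective (s : List (Module.End ℂ F))
    (h : ∀ f ∈ s, Function.Injective f) : Function.Injective (s.prod : Module.End ℂ F) := by
  induction s with
  | nil => exact fun x y hxy => hxy
  | cons a s ih =>
    rw [List.prod_cons, Module.End.mul_eq_comp]
    have ha := h a List.mem_cons_self
    have hs := ih fun f hf => h f (List.mem_cons_of_mem a hf)
    intro x y hxy
    exact hs (ha hxy)

lemma intertwine_eq_zero (g : E →L[ℂ] F) (a : E →L[ℂ] E) (b : F →L[ℂ] F)
    (hab : g.comp a = b.comp g)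
    (hdisj : ∀ r : ℂ, Module.End.HasEigenvalue (a : E →ₗ[ℂ] E) r →
      ¬ Module.End.HasEigenvalue (b : F →ₗ[ℂ] F) r) : g = 0 := by
  set aL : Module.End ℂ E := (a : E →ₗ[ℂ] E) with haL
  set bL : Module.End ℂ F := (b : F →ₗ[ℂ] F) with hbL
  set gL : E →ₗ[ℂ] F := (g : E →ₗ[ℂ] F) with hgL
  have hcomm : gL ∘ₗ aL = bL ∘ₗ gL := by
    rw [haL, hbL, hgL]; exact congrArg (fun f : E →L[ℂ] F => (f : E →ₗ[ℂ] F)) hab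
  have hpow : ∀ n : ℕ, gL ∘ₗ (aL ^ n) = (bL ^ n) ∘ₗ gL := by
    intro n
    induction n with
    | zero => simp [Module.End.one_eq_id]
    | succ n ih =>
      rw [pow_succ', pow_succ', Module.End.mul_eq_comp, Module.End.mul_eq_comp,
        ← LinearMap.comp_assoc, hcomm, LinearMap.comp_assoc, ih, LinearMap.comp_assoc]
  have hpoly : ∀ p : Polynomial ℂ, gL ∘ₗ (aeval aL p) = (aeval bL p) ∘ₗ gL := by
    intro p
    induction p using Polynomial.induction_on' with
    | add p q hp hq =>
      rw [map_add, map_add, LinearMap.comp_add, LinearMap.add_comp, hp, hq]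
    | monomial n r =>
      simp only [aeval_monomial, Algebra.algebraMap_eq_smul_one, smul_mul_assoc, one_mul,
        LinearMap.comp_smul, LinearMap.smul_comp, hpow n]
  set p := minpoly ℂ aL with hp
  have hmonic : p.Monic := minpoly.monic (Algebra.IsIntegral.isIntegral aL)
  have hp0 : p ≠ 0 := hmonic.ne_zero
  have hsplit : Splits p := IsAlgClosed.splits p
  have hprod : p = (p.roots.map fun r => X - C r).prod :=
    hsplit.eq_prod_roots_of_monic hmonic
  have hprodl : p = (p.roots.toList.map fun r => X - C r).prod := by
    conv_lhs => rw [hprod]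
    rw [← Multiset.coe_toList p.roots, Multiset.map_coe, Multiset.prod_coe,
      Multiset.coe_toList]
  have h0 : (aeval bL p) ∘ₗ gL = 0 := by
    rw [← hpoly, minpoly.aeval, LinearMap.comp_zero]
  have hinj : Function.Injective (aeval bL p) := by
    have he : aeval bL p = ((p.roots.toList.map fun r => X - C r).map (aeval bL)).prod := by
      conv_lhs => rw [hprodl]
      rw [map_list_prod]
    rw [he, List.map_map]
    apply list_prod_injective
    intro f hf
    simp only [List.mem_map, Function.comp_apply] at hf
    obtain ⟨r, hr, rfl⟩ := hf
    have hr' : r ∈ p.roots := by rwa [← Multiset.mem_toList]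
    have hroot : Module.End.HasEigenvalue aL r :=
      Module.End.hasEigenvalue_iff_isRoot.mpr (isRoot_of_mem_roots hr')
    have hnb : ¬ Module.End.HasEigenvalue bL r := hdisj r hroot
    have heig : Module.End.eigenspace bL r = ⊥ := not_ne_iff.mp
      (fun hne => hnb (Module.End.hasEigenvalue_iff.mpr hne))
    have hker : LinearMap.ker (aeval bL (X - C r)) = ⊥ := by
      have he2 : aeval bL (X - C r) = bL - r • 1 := by
        rw [map_sub, aeval_X, aeval_C, Algebra.algebraMap_eq_smul_one]
      rw [he2, ← Module.End.eigenspace_def, heig]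
    exact LinearMap.ker_eq_bot.mp hker
  refine ContinuousLinearMap.ext fun x => ?_
  have h2 : (aeval bL p) (gL x) = (aeval bL p) 0 := by
    have h3 := congrArg (fun (h : E →ₗ[ℂ] F) => h x) h0
    simpa using h3
  have h4 := hinj h2
  exact h4

end linalg

section extract
variable {G : Type*} [NormedAddCommGroup G] [NormedSpace ℂ G] [FiniteDimensional ℂ G]

lemma exists_eigen_of_ker_ne_bot (T S : G →L[ℂ] G) (hcomm : T * S = S * T)
    (hne : LinearMap.ker (S : G →ₗ[ℂ] G) ≠ ⊥) :
    ∃ (μ : ℂ) (g : G), g ≠ 0 ∧ S g = 0 ∧ T g = μ • g := by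
  set K := LinearMap.ker (S : G →ₗ[ℂ] G) with hK
  have : Nontrivial K := Submodule.nontrivial_iff_ne_bot.mpr hne
  have hmap : ∀ x ∈ K, (T : G →ₗ[ℂ] G) x ∈ K := by
    intro x hx
    have hx' : S x = 0 := LinearMap.mem_ker.mp hx
    have h2 := congrArg (fun (f : G →L[ℂ] G) => f x) hcomm
    simp only [ContinuousLinearMap.mul_apply] at h2
    have : S (T x) = 0 := by rw [← h2, hx', map_zero]
    exact LinearMap.mem_ker.mpr this
  set Tres : Module.End ℂ K := (T : G →ₗ[ℂ] G).restrict hmap with hTres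
  obtain ⟨μ, hμ⟩ := Module.End.exists_eigenvalue Tres
  obtain ⟨v, hv⟩ := hμ.exists_hasEigenvector
  refine ⟨μ, ↑v, ?_, LinearMap.mem_ker.mp v.2, ?_⟩
  · intro h
    exact hv.2 (Subtype.coe_injective (by simpa using h))
  · have h1 : Tres v = μ • v := hv.apply_eq_smul
    have h2 := congrArg (Subtype.val) h1
    simpa [hTres, LinearMap.restrict_apply] using h2

end extract


/-- Corollary: for `γ : E → F` linear and endomorphisms `α`, `β` with spectra in Σ₁,
`γ ∘ exp(2πi·α) = exp(2πi·β) ∘ γ` iff `γ ∘ α = β ∘ γ`. -/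
theorem comp_expEnd_eq_expEnd_comp_iff
    {E F : Type*} [NormedAddCommGroup E] [NormedSpace ℂ E] [FiniteDimensional ℂ E]
    [NormedAddCommGroup F] [NormedSpace ℂ F] [FiniteDimensional ℂ F]
    (γ : E →L[ℂ] F) (α : E →L[ℂ] E) (β : F →L[ℂ] F)
    (hα : spectrum ℂ α ⊆ Sigma1) (hβ : spectrum ℂ β ⊆ Sigma1) :
    γ.comp (expEnd α) = (expEnd β).comp γ ↔ γ.comp α = β.comp γ := by
  set rA : (E →L[ℂ] F) →L[ℂ] (E →L[ℂ] F) := rOp (F := F) α with hrA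
  set lB : (E →L[ℂ] F) →L[ℂ] (E →L[ℂ] F) := lOp (E := E) β with hlB
  set L : (E →L[ℂ] F) →L[ℂ] (E →L[ℂ] F) := rA - lB with hLdef
  have hcommBA : Commute lB rA := commute_lOp_rOp α β
  have hcommBL : Commute lB L := by
    rw [hLdef]
    exact hcommBA.sub_right (Commute.refl lB)
  -- injectivity of psiEnd L
  have hK : LinearMap.ker (psiEnd L : (E →L[ℂ] F) →ₗ[ℂ] (E →L[ℂ] F)) = ⊥ := by
    by_contra hne
    obtain ⟨μ, g, hg0, hgker, hgeig⟩ :=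
      exists_eigen_of_ker_ne_bot L (psiEnd L) (commute_psiEnd L) hne
    have hs : sPsi μ = 0 := by
      have h1 := psiEnd_apply_eigen hgeig
      rw [hgker] at h1
      rcases smul_eq_zero.mp h1.symm with h | h
      · exact h
      · exact absurd h hg0
    obtain ⟨n, hn0, hμn⟩ := sPsi_eq_zero hs
    have h2 : g.comp α - β.comp g = μ • g := by
      have h1 : L g = μ • g := hgeig
      rw [hLdef] at h1
      simpa [hrA, hlB] using h1
    have heq : g.comp (α - μ • 1) = β.comp g := by
      refine ContinuousLinearMap.ext fun x => ?_
      have h3 := congrArg (fun (f : E →L[ℂ] F) => f x) h2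
      simp only [ContinuousLinearMap.sub_apply, ContinuousLinearMap.comp_apply,
        ContinuousLinearMap.smul_apply] at h3
      simp only [ContinuousLinearMap.comp_apply, ContinuousLinearMap.sub_apply,
        ContinuousLinearMap.smul_apply, ContinuousLinearMap.one_apply, map_sub, map_smul]
      have : g (α x) - β (g x) = μ • g x := h3
      rw [← this]
      abel
    have hdisj : ∀ r : ℂ, Module.End.HasEigenvalue ((α - μ • 1 : E →L[ℂ] E) : E →ₗ[ℂ] E) r →
        ¬ Module.End.HasEigenvalue ((β : F →L[ℂ] F) : F →ₗ[ℂ] F) r := by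
      intro r hra hrb
      have hEa : Module.End.HasEigenvalue ((α : E →L[ℂ] E) : E →ₗ[ℂ] E) (r + μ) := by
        obtain ⟨v, hv⟩ := hra.exists_hasEigenvector
        have h4 : ((α - μ • 1 : E →L[ℂ] E) : E →ₗ[ℂ] E) v = r • v := hv.apply_eq_smul
        have h5 : α v - μ • v = r • v := by
          simpa [ContinuousLinearMap.sub_apply, ContinuousLinearMap.smul_apply,
            ContinuousLinearMap.one_apply] using h4
        have h6 : ((α : E →L[ℂ] E) : E →ₗ[ℂ] E) v = (r + μ) • v := by
          have : α v = (r + μ) • v := by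
            rw [add_smul]
            rw [← h5]
            abel
          exact this
        exact Module.End.hasEigenvalue_of_hasEigenvector
          ⟨Module.End.mem_eigenspace_iff.mpr h6, hv.2⟩
      have ha1 : (r + μ) ∈ Sigma1 := hα (mem_spectrum_of_hasEigenvalue hEa)
      have hb1 : r ∈ Sigma1 := hβ (mem_spectrum_of_hasEigenvalue hrb)
      have : n = 0 := sigma1_sub ha1 hb1 (by rw [hμn]; ring)
      exact hn0 this
    exact hg0 (intertwine_eq_zero g (α - μ • 1) β heq hdisj)
  have hpsiInj : Function.Injective (psiEnd L) := LinearMap.ker_eq_bot.mp hK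
  -- split of the exponential
  have hsum : rA = lB + L := by
    rw [hLdef]
    abel
  have hsplit : expEnd rA = expEnd lB * expEnd L := by
    rw [hsum]
    exact expEnd_add_of_commute lB L hcommBL
  -- injectivity of expEnd lB
  have hexpinj : ∀ u v : E →L[ℂ] F, expEnd lB u = expEnd lB v → u = v := by
    intro u v h
    have hinv : expEnd (-lB) * expEnd lB = 1 := expEnd_neg_mul lB
    have h2 := congrArg (fun w => expEnd (-lB) w) h
    calc u = (expEnd (-lB) * expEnd lB) u := by rw [hinv]; rfl
      _ = (expEnd (-lB) * expEnd lB) v := by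
          simp only [ContinuousLinearMap.mul_apply]; exact h2
      _ = v := by rw [hinv]; rfl
  -- the two sides as operator applications
  have hA : γ.comp (expEnd α) = expEnd rA γ := by
    rw [hrA]
    exact (expEnd_rOp_apply α γ).symm
  have hB : (expEnd β).comp γ = expEnd lB γ := by
    rw [hlB]
    exact (expEnd_lOp_apply β γ).symm
  -- main chain
  have step1 : γ.comp (expEnd α) = (expEnd β).comp γ ↔ expEnd L γ = γ := by
    rw [hA, hB, hsplit]
    constructor
    · intro h
      exact hexpinj _ _ (by simpa only [ContinuousLinearMap.mul_apply] using h)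
    · intro h
      rw [ContinuousLinearMap.mul_apply, h]
  have step2 : expEnd L γ = γ ↔ psiEnd L (L γ) = 0 := by
    rw [expEnd_eq L]
    constructor
    · intro h
      have h2 : γ + (L * psiEnd L) γ = γ := by
        simpa [ContinuousLinearMap.add_apply, ContinuousLinearMap.one_apply] using h
      have h3 : (L * psiEnd L) γ = 0 := by
        have := congrArg (fun x => x - γ) h2
        simpa using this
      rw [commute_psiEnd L] at h3
      simpa only [ContinuousLinearMap.mul_apply] using h3
    · intro h
      have h3 : (L * psiEnd L) γ = 0 := by
        rw [commute_psiEnd L]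
        simpa only [ContinuousLinearMap.mul_apply] using h
      simp only [ContinuousLinearMap.add_apply, ContinuousLinearMap.one_apply,
        ContinuousLinearMap.mul_apply]
      simp only [ContinuousLinearMap.mul_apply] at h3
      rw [h3, add_zero]
  have step3 : psiEnd L (L γ) = 0 ↔ L γ = 0 := by
    constructor
    · intro h
      apply hpsiInj
      rw [h, map_zero]
    · intro h
      rw [h, map_zero]
  have step4 : L γ = 0 ↔ γ.comp α = β.comp γ := by
    rw [hLdef]
    constructor
    · intro h
      have h2 : rA γ - lB γ = 0 := by simpa using h
      have := sub_eq_zero.mp h2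
      rw [hrA, hlB] at this
      simpa using this
    · intro h
      have : rA γ - lB γ = 0 := by
        rw [hrA, hlB]
        simp only [rOp_apply, lOp_apply]
        rw [h, sub_self]
      simpa using this
  rw [step1, step2, step3, step4]
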